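/- Let P, Q : ℝ × S² → ℝ be functions (playing the role of the news functions c_{,0} and d_{,0}) such that for every u ∈ ℝ the function ω ↦ P(u,ω)² + Q(u,ω)² is integrable on S². Suppose m₀, m₁, m₂, m₃ : ℝ → ℝ are differentiable functions satisfying the Bondi mass-loss formulas m_ν'(u) = -(1/(4π)) ∫_{S²} (P(u,ω)² + Q(u,ω)²) n^ν(ω) dS(ω) for ν = 0,1,2,3 and all u ∈ ℝ. Then the function u ↦ m₀(u) − √(m₁(u)² + m₂(u)² + m₃(u)²) is nonincreasing (antitone) on ℝ. -/

import Mathlib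

open MeasureTheory Real Metric

/-- The unit sphere S² in Euclidean ℝ³. -/
abbrev Sphere2 : Type := Metric.sphere (0 : EuclideanSpace ℝ (Fin 3)) 1

/-- The standard surface measure on S² (total measure 4π). -/
noncomputable def sphereMeasure : Measure Sphere2 :=
  (volume : Measure (EuclideanSpace ℝ (Fin 3))).toSphere

/-- The i-th Cartesian coordinate function on S², i = 0,1,2. -/
def sphereCoord (i : Fin 3) (ω : Sphere2) : ℝ := (ω : EuclideanSpace ℝ (Fin 3)) i

lemma sphereCoord_sq_sum (ω : Sphere2) :
    sphereCoord 0 ω ^ 2 + sphereCoord 1 ω ^ 2 + sphereCoord 2 ω ^ 2 = 1 := by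
  have hω : ‖(ω : EuclideanSpace ℝ (Fin 3))‖ = 1 := by
    have := ω.2
    rwa [mem_sphere_zero_iff_norm] at this
  have h2 : Real.sqrt (∑ i, ‖(ω : EuclideanSpace ℝ (Fin 3)) i‖ ^ 2) = 1 := by
    rw [← EuclideanSpace.norm_eq]; exact hω
  have h3 : (∑ i, ‖(ω : EuclideanSpace ℝ (Fin 3)) i‖ ^ 2) = 1 := by
    have hnn : (0:ℝ) ≤ ∑ i, ‖(ω : EuclideanSpace ℝ (Fin 3)) i‖ ^ 2 :=
      Finset.sum_nonneg fun i _ => sq_nonneg _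
    nlinarith [Real.sq_sqrt hnn]
  simpa [Fin.sum_univ_three, sphereCoord, Real.norm_eq_abs, sq_abs] using h3

lemma sphereCoord_continuous (i : Fin 3) : Continuous (sphereCoord i) :=
  (EuclideanSpace.proj (𝕜 := ℝ) i).continuous.comp continuous_subtype_val

lemma sphereCoord_abs_le (i : Fin 3) (ω : Sphere2) : |sphereCoord i ω| ≤ 1 := by
  have h := sphereCoord_sq_sum ω
  have : sphereCoord i ω ^ 2 ≤ 1 := by
    calc sphereCoord i ω ^ 2 ≤ ∑ j, sphereCoord j ω ^ 2 :=
          Finset.single_le_sum (fun j _ => sq_nonneg (sphereCoord j ω)) (Finset.mem_univ i)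
      _ = 1 := by rw [Fin.sum_univ_three]; exact sphereCoord_sq_sum ω
  nlinarith [sq_abs (sphereCoord i ω), abs_nonneg (sphereCoord i ω)]

/-- Cauchy–Schwarz in ℝ³. -/
lemma cs3 (a₁ a₂ a₃ b₁ b₂ b₃ : ℝ) (ha : a₁ ^ 2 + a₂ ^ 2 + a₃ ^ 2 ≤ 1)
    (s : ℝ) (hs : 0 ≤ s) (hb : b₁ ^ 2 + b₂ ^ 2 + b₃ ^ 2 = s ^ 2) :
    a₁ * b₁ + a₂ * b₂ + a₃ * b₃ ≤ s := by
  nlinarith [sq_nonneg (a₁ * b₂ - a₂ * b₁), sq_nonneg (a₁ * b₃ - a₃ * b₁),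
    sq_nonneg (a₂ * b₃ - a₃ * b₂), sq_nonneg (a₁ * b₁ + a₂ * b₂ + a₃ * b₃ - s),
    sq_nonneg (a₁ * b₁ + a₂ * b₂ + a₃ * b₃ + s)]

/-- Key step: for any direction vector with norm at most 1, the corresponding
linear combination of the Bondi energy-momentum is nonincreasing. -/
lemma bondi_linear_antitone
    (P Q : ℝ × Sphere2 → ℝ)
    (hPQint : ∀ u : ℝ,
      Integrable (fun ω : Sphere2 => (P (u, ω)) ^ 2 + (Q (u, ω)) ^ 2) sphereMeasure)
    (m₀ m₁ m₂ m₃ : ℝ → ℝ)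
    (hm₀ : ∀ u : ℝ, HasDerivAt m₀
      (-(1 / (4 * π)) * ∫ ω : Sphere2, ((P (u, ω)) ^ 2 + (Q (u, ω)) ^ 2) ∂sphereMeasure) u)
    (hm₁ : ∀ u : ℝ, HasDerivAt m₁
      (-(1 / (4 * π)) * ∫ ω : Sphere2,
        ((P (u, ω)) ^ 2 + (Q (u, ω)) ^ 2) * sphereCoord 0 ω ∂sphereMeasure) u)
    (hm₂ : ∀ u : ℝ, HasDerivAt m₂
      (-(1 / (4 * π)) * ∫ ω : Sphere2,
        ((P (u, ω)) ^ 2 + (Q (u, ω)) ^ 2) * sphereCoord 1 ω ∂sphereMeasure) u)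
    (hm₃ : ∀ u : ℝ, HasDerivAt m₃
      (-(1 / (4 * π)) * ∫ ω : Sphere2,
        ((P (u, ω)) ^ 2 + (Q (u, ω)) ^ 2) * sphereCoord 2 ω ∂sphereMeasure) u)
    (a₁ a₂ a₃ : ℝ) (ha : a₁ ^ 2 + a₂ ^ 2 + a₃ ^ 2 ≤ 1) :
    Antitone (fun u : ℝ => m₀ u - (a₁ * m₁ u + a₂ * m₂ u + a₃ * m₃ u)) := by
  set f : ℝ → Sphere2 → ℝ := fun u ω => (P (u, ω)) ^ 2 + (Q (u, ω)) ^ 2 with hf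
  -- integrals
  set I₀ : ℝ → ℝ := fun u => ∫ ω : Sphere2, f u ω ∂sphereMeasure
  set I : Fin 3 → ℝ → ℝ := fun i u => ∫ ω : Sphere2, f u ω * sphereCoord i ω ∂sphereMeasure
  have hD : ∀ u, HasDerivAt (fun u : ℝ => m₀ u - (a₁ * m₁ u + a₂ * m₂ u + a₃ * m₃ u))
      (-(1 / (4 * π)) * I₀ u - (a₁ * (-(1 / (4 * π)) * I 0 u)
        + a₂ * (-(1 / (4 * π)) * I 1 u) + a₃ * (-(1 / (4 * π)) * I 2 u))) u := by
    intro u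
    exact (hm₀ u).sub ((((hm₁ u).const_mul a₁).add ((hm₂ u).const_mul a₂)).add
      ((hm₃ u).const_mul a₃))
  refine antitone_of_hasDerivAt_nonpos hD ?_
  intro u
  have hfi : Integrable (f u) sphereMeasure := hPQint u
  have hci : ∀ i : Fin 3,
      Integrable (fun ω => f u ω * sphereCoord i ω) sphereMeasure := by
    intro i
    have : Integrable (fun ω => sphereCoord i ω * f u ω) sphereMeasure :=
      hfi.bdd_mul ((sphereCoord_continuous i).aestronglyMeasurable)
        (c := 1) (Filter.Eventually.of_forall fun ω => by simpa [Real.norm_eq_abs] using sphereCoord_abs_le i ω)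
    simpa [mul_comm] using this
  -- the combined quantity is -(1/(4π)) times a nonneg integral
  have h1 : Integrable (fun ω => a₁ * (f u ω * sphereCoord 0 ω)) sphereMeasure :=
    (hci 0).const_mul a₁
  have h2 : Integrable (fun ω => a₂ * (f u ω * sphereCoord 1 ω)) sphereMeasure :=
    (hci 1).const_mul a₂
  have h3 : Integrable (fun ω => a₃ * (f u ω * sphereCoord 2 ω)) sphereMeasure :=
    (hci 2).const_mul a₃
  have h12 : Integrable (fun ω => a₁ * (f u ω * sphereCoord 0 ω)
      + a₂ * (f u ω * sphereCoord 1 ω)) sphereMeasure := h1.add h2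
  have h123 : Integrable (fun ω => a₁ * (f u ω * sphereCoord 0 ω)
      + a₂ * (f u ω * sphereCoord 1 ω) + a₃ * (f u ω * sphereCoord 2 ω)) sphereMeasure :=
    h12.add h3
  have hcomb : I₀ u - (a₁ * I 0 u + a₂ * I 1 u + a₃ * I 2 u)
      = ∫ ω : Sphere2, (f u ω - (a₁ * (f u ω * sphereCoord 0 ω)
          + a₂ * (f u ω * sphereCoord 1 ω) + a₃ * (f u ω * sphereCoord 2 ω))) ∂sphereMeasure := by
    rw [integral_sub hfi h123, integral_add h12 h3, integral_add h1 h2,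
      integral_const_mul, integral_const_mul, integral_const_mul]
  have hnonneg : 0 ≤ I₀ u - (a₁ * I 0 u + a₂ * I 1 u + a₃ * I 2 u) := by
    rw [hcomb]
    refine integral_nonneg fun ω => ?_
    simp only [Pi.zero_apply]
    have hfnn : 0 ≤ f u ω := by positivity
    have hcs : a₁ * sphereCoord 0 ω + a₂ * sphereCoord 1 ω + a₃ * sphereCoord 2 ω ≤ 1 :=
      cs3 a₁ a₂ a₃ _ _ _ ha 1 zero_le_one (by simpa using sphereCoord_sq_sum ω)
    nlinarith [mul_nonneg hfnn (sub_nonneg.mpr hcs)]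
  have hπ : 0 < 1 / (4 * π) := by positivity
  have : -(1 / (4 * π)) * I₀ u - (a₁ * (-(1 / (4 * π)) * I 0 u)
      + a₂ * (-(1 / (4 * π)) * I 1 u) + a₃ * (-(1 / (4 * π)) * I 2 u))
      = -(1 / (4 * π)) * (I₀ u - (a₁ * I 0 u + a₂ * I 1 u + a₃ * I 2 u)) := by ring
  show -(1 / (4 * π)) * I₀ u - (a₁ * (-(1 / (4 * π)) * I 0 u)
      + a₂ * (-(1 / (4 * π)) * I 1 u) + a₃ * (-(1 / (4 * π)) * I 2 u)) ≤ 0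
  rw [this]
  nlinarith

/-- Generalized Bondi mass loss (Proposition 2.1): if the Bondi energy-momentum
`m₀, m₁, m₂, m₃` satisfies the mass-loss formulas with news functions `P`, `Q`, then
`m₀ - √(m₁² + m₂² + m₃²)` is nonincreasing. -/
theorem bondi_energy_nonincreasing
    (P Q : ℝ × Sphere2 → ℝ)
    (hPQint : ∀ u : ℝ,
      Integrable (fun ω : Sphere2 => (P (u, ω)) ^ 2 + (Q (u, ω)) ^ 2) sphereMeasure)
    (m₀ m₁ m₂ m₃ : ℝ → ℝ)
    (hm₀ : ∀ u : ℝ, HasDerivAt m₀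
      (-(1 / (4 * π)) * ∫ ω : Sphere2, ((P (u, ω)) ^ 2 + (Q (u, ω)) ^ 2) ∂sphereMeasure) u)
    (hm₁ : ∀ u : ℝ, HasDerivAt m₁
      (-(1 / (4 * π)) * ∫ ω : Sphere2,
        ((P (u, ω)) ^ 2 + (Q (u, ω)) ^ 2) * sphereCoord 0 ω ∂sphereMeasure) u)
    (hm₂ : ∀ u : ℝ, HasDerivAt m₂
      (-(1 / (4 * π)) * ∫ ω : Sphere2,
        ((P (u, ω)) ^ 2 + (Q (u, ω)) ^ 2) * sphereCoord 1 ω ∂sphereMeasure) u)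
    (hm₃ : ∀ u : ℝ, HasDerivAt m₃
      (-(1 / (4 * π)) * ∫ ω : Sphere2,
        ((P (u, ω)) ^ 2 + (Q (u, ω)) ^ 2) * sphereCoord 2 ω ∂sphereMeasure) u) :
    Antitone (fun u : ℝ =>
      m₀ u - Real.sqrt ((m₁ u) ^ 2 + (m₂ u) ^ 2 + (m₃ u) ^ 2)) := by
  intro u v huv
  simp only
  set su : ℝ := Real.sqrt ((m₁ u) ^ 2 + (m₂ u) ^ 2 + (m₃ u) ^ 2) with hsu
  set sv : ℝ := Real.sqrt ((m₁ v) ^ 2 + (m₂ v) ^ 2 + (m₃ v) ^ 2) with hsv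
  have hsu_nn : 0 ≤ su := Real.sqrt_nonneg _
  have hsv_nn : 0 ≤ sv := Real.sqrt_nonneg _
  have hsu_sq : (m₁ u) ^ 2 + (m₂ u) ^ 2 + (m₃ u) ^ 2 = su ^ 2 := by
    rw [hsu, Real.sq_sqrt (by positivity)]
  have hsv_sq : (m₁ v) ^ 2 + (m₂ v) ^ 2 + (m₃ v) ^ 2 = sv ^ 2 := by
    rw [hsv, Real.sq_sqrt (by positivity)]
  -- choose the direction of m(u)
  by_cases hzero : su = 0
  · -- m(u) = 0; use a = 0
    have h0 := bondi_linear_antitone P Q hPQint m₀ m₁ m₂ m₃ hm₀ hm₁ hm₂ hm₃ 0 0 0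
      (by norm_num) huv
    simp only [zero_mul, add_zero, zero_add, sub_zero] at h0
    have : m₀ v - sv ≤ m₀ v := by linarith
    calc m₀ v - sv ≤ m₀ v := this
      _ ≤ m₀ u := h0
      _ = m₀ u - su := by rw [hzero]; ring
  · have hsu_pos : 0 < su := lt_of_le_of_ne hsu_nn (Ne.symm hzero)
    have hzero' : su ≠ 0 := hzero
    have ha : (m₁ u / su) ^ 2 + (m₂ u / su) ^ 2 + (m₃ u / su) ^ 2 ≤ 1 := by
      refine le_of_eq ?_
      field_simp
      linarith [hsu_sq]
    have hanti := bondi_linear_antitone P Q hPQint m₀ m₁ m₂ m₃ hm₀ hm₁ hm₂ hm₃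
      (m₁ u / su) (m₂ u / su) (m₃ u / su) ha huv
    simp only at hanti
    have hau : (m₁ u / su) * m₁ u + (m₂ u / su) * m₂ u + (m₃ u / su) * m₃ u = su := by
      field_simp
      nlinarith [hsu_sq]
    have hav : (m₁ u / su) * m₁ v + (m₂ u / su) * m₂ v + (m₃ u / su) * m₃ v ≤ sv :=
      cs3 _ _ _ _ _ _ ha sv hsv_nn hsv_sq
    calc m₀ v - sv
        ≤ m₀ v - ((m₁ u / su) * m₁ v + (m₂ u / su) * m₂ v + (m₃ u / su) * m₃ v) := by linarith
      _ ≤ m₀ u - ((m₁ u / su) * m₁ u + (m₂ u / su) * m₂ u + (m₃ u / su) * m₃ u) := hanti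
      _ = m₀ u - su := by rw [hau]
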